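/- Let 1 ≤ p < ∞ and γ ∈ A_p(ℝⁿ). Then there exist δ ∈ (0,1) and C > 0, depending only on n, p, and the A_p constant of γ, such that for every cube Q and every measurable subset S ⊆ Q with |S| > 0, M_S(γ)/M_Q(γ) ≤ C (|S|/|Q|)^{δ−1}. -/

import Mathlib

open MeasureTheory ENNReal

noncomputable section

/-- The axis-parallel cube in `ℝⁿ` with lower corner `x` and side length `r`. -/
def cube {n : ℕ} (x : Fin n → ℝ) (r : ℝ) : Set (Fin n → ℝ) :=
  Set.Icc x (fun i => x i + r)

/-- `M_A(f)`: the average of `f` over `A` (an extended nonnegative real). -/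
def avg {n : ℕ} (A : Set (Fin n → ℝ)) (f : (Fin n → ℝ) → ℝ) : ℝ≥0∞ :=
  (volume A)⁻¹ * ∫⁻ y in A, ENNReal.ofReal (f y)

/-- `M_{A,r}(f)`: the `r`-th power mean of `|f|` over `A`. -/
def avgP {n : ℕ} (A : Set (Fin n → ℝ)) (r : ℝ) (f : (Fin n → ℝ) → ℝ) : ℝ≥0∞ :=
  (avg A fun y => |f y| ^ r) ^ (1 / r)

/-- The conjugate exponent `p' = p/(p-1)`. -/
def conjExp (p : ℝ) : ℝ := p / (p - 1)

/-- A weight: a locally integrable function which is a.e. positive. -/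
def IsWeight {n : ℕ} (γ : (Fin n → ℝ) → ℝ) : Prop :=
  LocallyIntegrable γ volume ∧ ∀ᵐ x ∂(volume : Measure (Fin n → ℝ)), 0 < γ x

/-- The `A_p` inequality `M_Q(γ) · M_{Q,p'/p}(γ⁻¹) ≤ C` over all cubes. -/
def ApBound {n : ℕ} (p C : ℝ) (γ : (Fin n → ℝ) → ℝ) : Prop :=
  ∀ (x : Fin n → ℝ) (r : ℝ), 0 < r →
    avg (cube x r) γ * avgP (cube x r) (conjExp p / p) (fun y => (γ y)⁻¹)
      ≤ ENNReal.ofReal C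

/-- The Muckenhoupt class `A_p`, `1 < p < ∞`. -/
def IsAp {n : ℕ} (p : ℝ) (γ : (Fin n → ℝ) → ℝ) : Prop :=
  ∃ C : ℝ, 0 < C ∧ ApBound p C γ

/-- The `A_1` inequality with constant `C`. -/
def A1Bound {n : ℕ} (C : ℝ) (γ : (Fin n → ℝ) → ℝ) : Prop :=
  ∀ (x : Fin n → ℝ) (r : ℝ), 0 < r →
    ∀ᵐ y ∂(volume : Measure (Fin n → ℝ)),
      y ∈ cube x r → avg (cube x r) γ ≤ ENNReal.ofReal (C * γ y)

/-- The Muckenhoupt class `A_1`. -/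
def IsA1 {n : ℕ} (γ : (Fin n → ℝ) → ℝ) : Prop :=
  ∃ C : ℝ, 0 < C ∧ A1Bound C γ


open Set Metric Filter Topology

namespace ApRR


variable {n : ℕ}

/-- dyadic sub-cell of the cube with corner `q`, side `r`, at scale `k`, index `m`. -/
def cell (q : Fin n → ℝ) (r : ℝ) (k : ℕ) (m : Fin n → ℕ) : Set (Fin n → ℝ) :=
  univ.pi fun i => Ico (q i + m i * (r / 2 ^ k)) (q i + (m i + 1) * (r / 2 ^ k))

/-- the half-open version of the mother cube -/
def Qh (q : Fin n → ℝ) (r : ℝ) : Set (Fin n → ℝ) :=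
  univ.pi fun i => Ico (q i) (q i + r)

def idx (q : Fin n → ℝ) (r : ℝ) (k : ℕ) (x : Fin n → ℝ) (i : Fin n) : ℕ :=
  ⌊(x i - q i) / (r / 2 ^ k)⌋₊

variable {q : Fin n → ℝ} {r : ℝ} (hr : 0 < r)

lemma mem_cell {k m x} : x ∈ cell q r k m ↔
    ∀ i, (m i : ℝ) * (r / 2 ^ k) ≤ x i - q i ∧ x i - q i < (m i + 1) * (r / 2 ^ k) := by
  simp only [cell, Set.mem_pi, mem_univ, forall_true_left, mem_Ico]
  refine forall_congr' fun i => ?_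
  constructor <;> rintro ⟨h1, h2⟩ <;> exact ⟨by linarith, by linarith⟩

include hr in
lemma hpos (k : ℕ) : (0:ℝ) < r / 2 ^ k := div_pos hr (by positivity)

include hr in
lemma idx_of_mem {k m x} (hx : x ∈ cell q r k m) : idx q r k x = m := by
  funext i
  obtain ⟨h1, h2⟩ := mem_cell.1 hx i
  have hh := hpos hr k
  have h0 : (0:ℝ) ≤ (x i - q i) / (r / 2 ^ k) :=
    div_nonneg (le_trans (by positivity) h1) hh.le
  rw [idx, Nat.floor_eq_iff h0]
  constructor
  · rw [le_div_iff₀ hh]; exact h1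
  · rw [div_lt_iff₀ hh]; push_cast; exact h2

include hr in
lemma le_of_mem_cell {k m x} (hx : x ∈ cell q r k m) (i : Fin n) : q i ≤ x i := by
  have := (mem_cell.1 hx i).1
  nlinarith [hpos hr k, (Nat.cast_nonneg (m i) : (0:ℝ) ≤ m i)]

include hr in
lemma mem_cell_idx {k x} (hx : ∀ i, q i ≤ x i) : x ∈ cell q r k (idx q r k x) := by
  rw [mem_cell]
  intro i
  have hh := hpos hr k
  have h0 : (0:ℝ) ≤ (x i - q i) / (r / 2 ^ k) := div_nonneg (by linarith [hx i]) hh.le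
  constructor
  · rw [← le_div_iff₀ hh]; exact Nat.floor_le h0
  · rw [← div_lt_iff₀ hh]; push_cast; exact Nat.lt_floor_add_one _

include hr in
lemma idx_div {j k : ℕ} (hjk : j ≤ k) (x : Fin n → ℝ) (i : Fin n) :
    idx q r j x i = idx q r k x i / 2 ^ (k - j) := by
  rw [idx, idx, ← Nat.floor_div_natCast]
  congr 1
  have h2 : ((2:ℝ) ^ (k - j) : ℝ) ≠ 0 := by positivity
  have : (r / 2 ^ k) * 2 ^ (k - j) = r / 2 ^ j := by
    rw [div_mul_eq_mul_div, div_eq_div_iff (by positivity) (by positivity)]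
    rw [mul_assoc, ← pow_add]
    congr 2
    omega
  push_cast
  rw [div_div, this]

include hr in
lemma cell_subset_ancestor {j k : ℕ} (hjk : j ≤ k) (m : Fin n → ℕ) :
    cell q r k m ⊆ cell q r j (fun i => m i / 2 ^ (k - j)) := by
  intro x hx
  have h1 : idx q r j x = fun i => m i / 2 ^ (k - j) := by
    funext i
    rw [idx_div hr hjk, idx_of_mem hr hx]
  have := mem_cell_idx hr (k := j) (le_of_mem_cell hr hx)
  rwa [h1] at this

include hr in
lemma cell_subset_Qh {k : ℕ} {m : Fin n → ℕ} (hm : ∀ i, m i < 2 ^ k) :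
    cell q r k m ⊆ Qh q r := by
  intro x hx i _
  rw [mem_Ico]
  refine ⟨le_of_mem_cell hr hx i, ?_⟩
  have h2 := (mem_cell.1 hx i).2
  have hh := hpos hr k
  have hc : ((m i : ℝ) + 1) ≤ 2 ^ k := by exact_mod_cast hm i
  have hd : ((m i : ℝ) + 1) * (r / 2 ^ k) ≤ 2 ^ k * (r / 2 ^ k) :=
    mul_le_mul_of_nonneg_right hc hh.le
  have h3 : (2:ℝ) ^ k * (r / 2 ^ k) = r := by field_simp
  linarith

lemma volume_cell (k : ℕ) (m : Fin n → ℕ) :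
    volume (cell q r k m) = ENNReal.ofReal (r / 2 ^ k) ^ n := by
  rw [cell, volume_pi_pi]
  simp only [Real.volume_Ico]
  have : ∀ i : Fin n, ENNReal.ofReal (q i + ((m i : ℝ) + 1) * (r / 2 ^ k) - (q i + (m i : ℝ) * (r / 2 ^ k)))
      = ENNReal.ofReal (r / 2 ^ k) := fun i => by congr 1; ring
  rw [Finset.prod_congr rfl (fun i _ => this i), Finset.prod_const, Finset.card_univ,
    Fintype.card_fin]

lemma volume_Qh : volume (Qh q r) = ENNReal.ofReal r ^ n := by
  rw [Qh, volume_pi_pi]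
  simp [Finset.prod_const]

include hr in
lemma cell_subset_closedBall {k m x} (hx : x ∈ cell q r k m) :
    cell q r k m ⊆ Metric.closedBall x (r / 2 ^ k) := by
  intro y hy
  rw [Metric.mem_closedBall]
  rw [dist_pi_le_iff (hpos hr k).le]
  intro i
  have h1 := mem_cell.1 hx i
  have h2 := mem_cell.1 hy i
  rw [Real.dist_eq, abs_le]
  constructor <;> nlinarith [h1.1, h1.2, h2.1, h2.2]

lemma volume_closedBall_pi (x : Fin n → ℝ) {ρ : ℝ} (hρ : 0 ≤ ρ) :
    volume (Metric.closedBall x ρ) = ENNReal.ofReal (2 * ρ) ^ n := by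
  rw [closedBall_pi x hρ, volume_pi_pi]
  simp only [Real.closedBall_eq_Icc, Real.volume_Icc]
  have : ∀ i : Fin n, ENNReal.ofReal (x i + ρ - (x i - ρ)) = ENNReal.ofReal (2 * ρ) :=
    fun i => by congr 1; ring
  rw [Finset.prod_congr rfl (fun i _ => this i), Finset.prod_const, Finset.card_univ,
    Fintype.card_fin]

namespace Step

variable {q : Fin n → ℝ} {r : ℝ}

/-- `S` has density `> 2^{-(n+1)}` on the cell `(k,m)` (multiplicative form). -/
def good (q : Fin n → ℝ) (r : ℝ) (S : Set (Fin n → ℝ)) (k : ℕ) (m : Fin n → ℕ) : Prop :=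
  volume (cell q r k m) < 2 ^ (n + 1) * volume (S ∩ cell q r k m)

/-- stopping index: in-range, good, and all strict ancestors not good. -/
def stp (q : Fin n → ℝ) (r : ℝ) (S : Set (Fin n → ℝ)) (p : ℕ × (Fin n → ℕ)) : Prop :=
  (∀ i, p.2 i < 2 ^ p.1) ∧ good q r S p.1 p.2 ∧
    ∀ j < p.1, ¬ good q r S j (fun i => p.2 i / 2 ^ (p.1 - j))

lemma measurable_cell (k : ℕ) (m : Fin n → ℕ) : MeasurableSet (cell q r k m) :=
  MeasurableSet.univ_pi fun i => measurableSet_Ico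

lemma cell_zero : cell q r 0 (fun _ => 0) = Qh q r := by
  unfold cell Qh
  refine Set.pi_congr rfl fun i _ => ?_
  norm_num

lemma volume_cell_lt_top (k : ℕ) (m : Fin n → ℕ) : volume (cell q r k m) < ∞ := by
  rw [volume_cell]
  exact ENNReal.pow_lt_top ENNReal.ofReal_lt_top

lemma volume_cell_pos (hr : 0 < r) (k : ℕ) (m : Fin n → ℕ) :
    0 < volume (cell q r k m) := by
  rw [volume_cell]
  exact ENNReal.pow_pos (ENNReal.ofReal_pos.2 (hpos hr k)) n

lemma volume_parent (hr : 0 < r) (k : ℕ) (m m' : Fin n → ℕ) :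
    volume (cell q r (k+1) m') * 2 ^ n = volume (cell q r k m) := by
  rw [volume_cell, volume_cell]
  have : ENNReal.ofReal (r / 2 ^ k) = 2 * ENNReal.ofReal (r / 2 ^ (k+1)) := by
    rw [show (2:ℝ≥0∞) = ENNReal.ofReal 2 by norm_num, ← ENNReal.ofReal_mul (by norm_num)]
    congr 1
    rw [pow_succ]
    field_simp
  rw [this, mul_pow]
  ring

/-- pairwise disjointness of the stopping cells -/
lemma stp_disjoint (hr : 0 < r) (S : Set (Fin n → ℝ)) :
    Pairwise (Function.onFun Disjoint
      (fun p : {p : ℕ × (Fin n → ℕ) // stp q r S p} => cell q r p.1.1 p.1.2)) := by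
  have key : ∀ p p' : {p : ℕ × (Fin n → ℕ) // stp q r S p}, p.1.1 < p'.1.1 →
      ¬ Disjoint (cell q r p.1.1 p.1.2) (cell q r p'.1.1 p'.1.2) → False := by
    rintro ⟨⟨k, m⟩, hs⟩ ⟨⟨k', m'⟩, hs'⟩ hlt hnd
    obtain ⟨x, hx1, hx2⟩ := Set.not_disjoint_iff.1 hnd
    have e1 : idx q r k x = m := idx_of_mem hr hx1
    have e2 : idx q r k' x = m' := idx_of_mem hr hx2
    have e3 : (fun i => m' i / 2 ^ (k' - k)) = m := by
      funext i
      rw [← e1, ← e2, idx_div hr hlt.le]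
    have := hs'.2.2 k hlt
    rw [e3] at this
    exact this hs.2.1
  intro p p' hne
  by_contra hnd
  rcases lt_trichotomy p.1.1 p'.1.1 with h | h | h
  · exact key p p' h hnd
  · -- same scale: indices must coincide
    obtain ⟨x, hx1, hx2⟩ := Set.not_disjoint_iff.1 hnd
    have e1 : idx q r p.1.1 x = p.1.2 := idx_of_mem hr hx1
    have e2 : idx q r p'.1.1 x = p'.1.2 := idx_of_mem hr hx2
    apply hne
    apply Subtype.ext
    apply Prod.ext h
    rw [← e1, ← e2, h]
  · exact key p' p h (fun hd => hnd hd.symm)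

/-- ball density implies cell density -/
lemma density_transfer (hr : 0 < r) {S : Set (Fin n → ℝ)} {x : Fin n → ℝ}
    (hx : ∀ i, q i ≤ x i) {k : ℕ}
    (hgt : ENNReal.ofReal (1 - (1/2:ℝ) ^ (n+2)) <
      volume (S ∩ Metric.closedBall x (r / 2 ^ k)) / volume (Metric.closedBall x (r / 2 ^ k))) :
    good q r S k (idx q r k x) := by
  set c := cell q r k (idx q r k x) with hc
  set B := Metric.closedBall x (r / 2 ^ k) with hB
  have hxc : x ∈ c := mem_cell_idx hr hx
  have hcB : c ⊆ B := cell_subset_closedBall hr hxc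
  have hh : (0:ℝ) < r / 2 ^ k := hpos hr k
  have hvc : volume c = ENNReal.ofReal (r / 2 ^ k) ^ n := volume_cell _ _
  have hvB : volume B = ENNReal.ofReal (2 * (r / 2 ^ k)) ^ n := volume_closedBall_pi x hh.le
  have hvBtop : volume B ≠ ∞ := by rw [hvB]; exact ENNReal.pow_ne_top ENNReal.ofReal_ne_top
  have hvB0 : volume B ≠ 0 := by
    rw [hvB]
    exact (ENNReal.pow_pos (ENNReal.ofReal_pos.2 (by linarith)) n).ne'
  -- from the division inequality
  have h1 : ENNReal.ofReal (1 - (1/2:ℝ) ^ (n+2)) * volume B < volume (S ∩ B) :=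
    (ENNReal.lt_div_iff_mul_lt (Or.inl hvB0) (Or.inl hvBtop)).1 hgt
  -- covering inequality
  have h2 : volume (S ∩ B) ≤ volume (S ∩ c) + (volume B - volume c) := by
    have hsub : S ∩ B ⊆ (S ∩ c) ∪ (B \ c) := by
      rintro y ⟨hyS, hyB⟩
      by_cases hyc : y ∈ c
      · exact Or.inl ⟨hyS, hyc⟩
      · exact Or.inr ⟨hyB, hyc⟩
    calc volume (S ∩ B) ≤ volume ((S ∩ c) ∪ (B \ c)) := measure_mono hsub
      _ ≤ volume (S ∩ c) + volume (B \ c) := measure_union_le _ _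
      _ = volume (S ∩ c) + (volume B - volume c) := by
          rw [measure_diff hcB (measurable_cell k _).nullMeasurableSet
            (volume_cell_lt_top k _).ne]
  -- go to real numbers
  rw [good]
  by_contra hng
  push_neg at hng
  -- real quantities
  set a := (volume (S ∩ c)).toReal
  set sB := (volume (S ∩ B)).toReal
  have hctop : volume c ≠ ∞ := (volume_cell_lt_top k _).ne
  have hSc_top : volume (S ∩ c) ≠ ∞ :=
    (lt_of_le_of_lt (measure_mono Set.inter_subset_right) (volume_cell_lt_top k _)).ne
  have hSB_top : volume (S ∩ B) ≠ ∞ :=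
    (lt_of_le_of_lt (measure_mono Set.inter_subset_right) hvBtop.lt_top).ne
  have hvc' : (volume c).toReal = (r / 2 ^ k) ^ n := by
    rw [hvc, ENNReal.toReal_pow, ENNReal.toReal_ofReal hh.le]
  have hvB' : (volume B).toReal = (2 * (r / 2 ^ k)) ^ n := by
    rw [hvB, ENNReal.toReal_pow, ENNReal.toReal_ofReal (by linarith)]
  have hBc : (volume B).toReal = 2 ^ n * (volume c).toReal := by
    rw [hvc', hvB', mul_pow]
  -- (i) from ¬good
  have hi : 2 ^ (n+1) * a ≤ (volume c).toReal := by
    have := ENNReal.toReal_mono hctop hng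
    rwa [ENNReal.toReal_mul, ENNReal.toReal_pow, ENNReal.toReal_ofNat] at this
  -- (iii) from h1
  have hiii : (1 - (1/2:ℝ) ^ (n+2)) * (volume B).toReal < sB := by
    have := ENNReal.toReal_strict_mono hSB_top h1
    have hnn : (0:ℝ) ≤ 1 - (1/2:ℝ) ^ (n+2) := by
      have := pow_le_one₀ (by norm_num : (0:ℝ) ≤ 1/2) (by norm_num : (1/2:ℝ) ≤ 1) (n := n+2)
      linarith
    rwa [ENNReal.toReal_mul, ENNReal.toReal_ofReal hnn] at this
  -- (ii) from h2
  have hdiff_top : volume B - volume c ≠ ∞ := (tsub_le_self.trans_lt hvBtop.lt_top).ne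
  have hii : sB ≤ a + ((volume B).toReal - (volume c).toReal) := by
    have h3 := ENNReal.toReal_mono (ENNReal.add_ne_top.2 ⟨hSc_top, hdiff_top⟩) h2
    rw [ENNReal.toReal_add hSc_top hdiff_top,
      ENNReal.toReal_sub_of_le (measure_mono hcB) hvBtop] at h3
    exact h3
  have hvcpos : 0 < (volume c).toReal := by rw [hvc']; positivity
  have h5 : ((1:ℝ)/2) ^ (n+2) * 2 ^ n = 1/4 := by
    rw [pow_add, mul_right_comm, ← mul_pow]
    norm_num
  have h6 : (2:ℝ) ≤ 2 ^ (n+1) := by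
    calc (2:ℝ) = 2 ^ 1 := (pow_one 2).symm
    _ ≤ 2 ^ (n+1) := by
        apply pow_le_pow_right₀ (by norm_num)
        omega
  have ha0 : 0 ≤ a := ENNReal.toReal_nonneg
  have h7 : (1 - (1/2:ℝ)^(n+2)) * ((volume B).toReal)
      = 2^n * (volume c).toReal - 1/4 * (volume c).toReal := by
    rw [hBc, sub_mul, one_mul, ← mul_assoc, h5]
  have h8 : 2 * a ≤ 2 ^ (n+1) * a := mul_le_mul_of_nonneg_right h6 ha0
  linarith

def Om (q : Fin n → ℝ) (r : ℝ) (S : Set (Fin n → ℝ)) : Set (Fin n → ℝ) :=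
  ⋃ p : {p : ℕ × (Fin n → ℕ) // stp q r S p}, cell q r p.1.1 p.1.2

lemma measurable_Om {S : Set (Fin n → ℝ)} : MeasurableSet (Om q r S) :=
  MeasurableSet.iUnion fun _ => measurable_cell _ _

lemma Om_subset_Qh (hr : 0 < r) {S : Set (Fin n → ℝ)} : Om q r S ⊆ Qh q r :=
  Set.iUnion_subset fun p => cell_subset_Qh hr p.2.1

lemma cover (hr : 0 < r) {S : Set (Fin n → ℝ)} (hSm : MeasurableSet S) (hS : S ⊆ Qh q r) :
    volume (S \ Om q r S) = 0 := by
  classical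
  have hmeas : MeasurableSet (Om q r S) := measurable_Om
  have htend1 : Tendsto (fun k : ℕ => r / 2 ^ k) atTop (𝓝 0) := by
    have h := _root_.tendsto_pow_atTop_nhds_zero_of_lt_one
      (by norm_num : (0:ℝ) ≤ 1/2) (by norm_num : (1:ℝ)/2 < 1)
    have h2 := h.const_mul r
    simpa [div_eq_mul_inv, ← inv_pow, one_div, mul_comm] using h2
  have htend2 : Tendsto (fun k : ℕ => r / 2 ^ k) atTop (𝓝[>] (0:ℝ)) :=
    tendsto_nhdsWithin_of_tendsto_nhds_of_eventually_within _ htend1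
      (Filter.Eventually.of_forall fun k => Set.mem_Ioi.2 (hpos hr k))
  have hlt1 : ENNReal.ofReal (1 - (1/2:ℝ) ^ (n+2)) < 1 := by
    rw [ENNReal.ofReal_lt_one]
    have : (0:ℝ) < (1/2:ℝ) ^ (n+2) := by positivity
    linarith
  have hae : ∀ᵐ x ∂(volume.restrict S), x ∈ Om q r S := by
    filter_upwards [Besicovitch.ae_tendsto_measure_inter_div volume S,
      ae_restrict_mem hSm] with x hx hxS
    have hq : ∀ i, q i ≤ x i := fun i => (hS hxS i (Set.mem_univ i)).1
    have hub : ∀ i, x i < q i + r := fun i => (hS hxS i (Set.mem_univ i)).2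
    have hev : ∀ᶠ k : ℕ in atTop, ENNReal.ofReal (1 - (1/2:ℝ) ^ (n+2)) <
        volume (S ∩ Metric.closedBall x (r / 2 ^ k)) /
          volume (Metric.closedBall x (r / 2 ^ k)) :=
      (hx.comp htend2).eventually (eventually_gt_nhds hlt1)
    obtain ⟨k, hk⟩ := hev.exists
    have hgood : ∃ k, good q r S k (idx q r k x) := ⟨k, density_transfer hr hq hk⟩
    set k0 := Nat.find hgood with hk0
    have hk0good : good q r S k0 (idx q r k0 x) := Nat.find_spec hgood
    have hst : stp q r S (k0, idx q r k0 x) := by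
      refine ⟨fun i => ?_, hk0good, fun j hj => ?_⟩
      · simp only [idx]
        rw [Nat.floor_lt (div_nonneg (by linarith [hq i]) (hpos hr k0).le)]
        rw [div_lt_iff₀ (hpos hr k0)]
        push_cast
        have : (2:ℝ) ^ k0 * (r / 2 ^ k0) = r := by field_simp
        linarith [hub i, this]
      · have heq : (fun i => idx q r k0 x i / 2 ^ (k0 - j)) = idx q r j x :=
          funext fun i => (idx_div hr hj.le x i).symm
        rw [heq]
        exact Nat.find_min hgood hj
    exact Set.mem_iUnion.2 ⟨⟨(k0, idx q r k0 x), hst⟩, mem_cell_idx hr hq⟩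
  have h0 : (volume.restrict S) (Om q r S)ᶜ = 0 := by
    have := ae_iff.1 hae; exact this
  rw [Measure.restrict_apply hmeas.compl] at h0
  rw [Set.diff_eq]
  rwa [Set.inter_comm] at h0

set_option maxHeartbeats 1000000 in
/-- The key stopping-time step. -/
lemma step (hr : 0 < r) (ν : Measure (Fin n → ℝ)) (hν : ν ≪ volume) (B : ℝ≥0∞)
    (Hcell : ∀ (k : ℕ) (m : Fin n → ℕ), (∀ i, m i < 2 ^ k) →
      ∀ S : Set (Fin n → ℝ), MeasurableSet S →
        2 * volume (S ∩ cell q r k m) ≤ volume (cell q r k m) →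
        ν (S ∩ cell q r k m) ≤ B * ν (cell q r k m))
    {S : Set (Fin n → ℝ)} (hSm : MeasurableSet S) (hS : S ⊆ Qh q r)
    (h0 : ¬ good q r S 0 (fun _ => 0)) :
    ∃ Ω : Set (Fin n → ℝ), MeasurableSet Ω ∧ Ω ⊆ Qh q r ∧
      ν S ≤ B * ν Ω ∧ volume Ω ≤ 2 ^ (n+1) * volume S := by
  classical
  refine ⟨Om q r S, measurable_Om, Om_subset_Qh hr, ?_, ?_⟩
  · -- ν S ≤ B * ν Ω
    have hνnull : ν (S \ Om q r S) = 0 := hν (cover hr hSm hS)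
    have hsplit : ν S ≤ ν (S ∩ Om q r S) + ν (S \ Om q r S) := by
      conv_lhs => rw [← Set.inter_union_diff S (Om q r S)]
      exact measure_union_le _ _
    rw [hνnull, add_zero] at hsplit
    -- per-cell
    have hpc : ∀ p : {p : ℕ × (Fin n → ℕ) // stp q r S p},
        ν (S ∩ cell q r p.1.1 p.1.2) ≤ B * ν (cell q r p.1.1 p.1.2) := by
      rintro ⟨⟨k, m⟩, hst⟩
      have hk1 : 1 ≤ k := by
        by_contra hk
        push_neg at hk
        interval_cases k
        have hm : m = fun _ => 0 := by
          funext i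
          have h : m i < 1 := by simpa using hst.1 i
          omega
        rw [hm] at hst
        exact h0 hst.2.1
      -- parent bound
      obtain ⟨k', rfl⟩ : ∃ k', k = k' + 1 := ⟨k - 1, by omega⟩
      have hpar := hst.2.2 k' (by omega)
      rw [good] at hpar
      push_neg at hpar
      have hanc : cell q r (k'+1) m ⊆ cell q r k' (fun i => m i / 2 ^ (k' + 1 - k')) :=
        cell_subset_ancestor hr (by omega) m
      have hkk : k' + 1 - k' = 1 := by omega
      rw [hkk] at hanc
      simp only [pow_one] at hanc
      have hmono : volume (S ∩ cell q r (k'+1) m) ≤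
          volume (S ∩ cell q r k' (fun i => m i / 2 ^ (k' + 1 - k'))) := by
        rw [hkk]
        simp only [pow_one]
        exact measure_mono (Set.inter_subset_inter_right S hanc)
      have hhalf : 2 * volume (S ∩ cell q r (k'+1) m) ≤ volume (cell q r (k'+1) m) := by
        have h1 : 2 ^ (n+1) * volume (S ∩ cell q r (k'+1) m) ≤
            volume (cell q r k' (fun i => m i / 2 ^ (k' + 1 - k'))) := by
          calc 2 ^ (n+1) * volume (S ∩ cell q r (k'+1) m)
              ≤ 2 ^ (n+1) * volume (S ∩ cell q r k' (fun i => m i / 2 ^ (k' + 1 - k'))) :=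
                mul_le_mul_right hmono _
            _ ≤ volume (cell q r k' (fun i => m i / 2 ^ (k' + 1 - k'))) := hpar
        have h2 : volume (cell q r k' (fun i => m i / 2 ^ (k' + 1 - k'))) =
            volume (cell q r (k'+1) m) * 2 ^ n := (volume_parent hr k' _ m).symm
        rw [h2] at h1
        have h4 : (2:ℝ≥0∞) ^ n * (2 * volume (S ∩ cell q r (k'+1) m)) ≤
            2 ^ n * volume (cell q r (k'+1) m) := by
          calc (2:ℝ≥0∞) ^ n * (2 * volume (S ∩ cell q r (k'+1) m))
              = 2 ^ (n+1) * volume (S ∩ cell q r (k'+1) m) := by ring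
            _ ≤ volume (cell q r (k'+1) m) * 2 ^ n := h1
            _ = 2 ^ n * volume (cell q r (k'+1) m) := mul_comm _ _
        exact (ENNReal.mul_le_mul_iff_right (pow_ne_zero n (by norm_num))
          (ENNReal.pow_ne_top (by norm_num))).1 h4
      exact Hcell (k'+1) m hst.1 S hSm hhalf
    -- sum over cells
    have hdisj := stp_disjoint (q := q) hr S
    have hmeasc : ∀ p : {p : ℕ × (Fin n → ℕ) // stp q r S p},
        MeasurableSet (cell q r p.1.1 p.1.2) := fun p => measurable_cell _ _
    have hSOm : ν (S ∩ Om q r S) =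
        ∑' p : {p : ℕ × (Fin n → ℕ) // stp q r S p}, ν (S ∩ cell q r p.1.1 p.1.2) := by
      rw [Om, Set.inter_iUnion]
      exact measure_iUnion
        (fun p p' hne => ((hdisj hne).inf_left' S).inf_right' S)
        (fun p => hSm.inter (hmeasc p))
    have hOm : ν (Om q r S) =
        ∑' p : {p : ℕ × (Fin n → ℕ) // stp q r S p}, ν (cell q r p.1.1 p.1.2) :=
      measure_iUnion hdisj hmeasc
    refine hsplit.trans ?_
    rw [hSOm, hOm, ENNReal.tsum_mul_left.symm]
    exact ENNReal.tsum_le_tsum hpc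
  · -- volume bound
    have hdisj := stp_disjoint (q := q) hr S
    have hOm : volume (Om q r S) =
        ∑' p : {p : ℕ × (Fin n → ℕ) // stp q r S p}, volume (cell q r p.1.1 p.1.2) :=
      measure_iUnion hdisj fun p => measurable_cell _ _
    have hSOm : volume (S ∩ Om q r S) =
        ∑' p : {p : ℕ × (Fin n → ℕ) // stp q r S p}, volume (S ∩ cell q r p.1.1 p.1.2) := by
      rw [Om, Set.inter_iUnion]
      exact measure_iUnion
        (fun p p' hne => ((hdisj hne).inf_left' S).inf_right' S)
        (fun p => hSm.inter (measurable_cell _ _))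
    rw [hOm]
    refine le_trans ?_ (mul_le_mul_right (measure_mono (Set.inter_subset_left (t := Om q r S))) _)
    rw [hSOm, ENNReal.tsum_mul_left.symm]
    exact ENNReal.tsum_le_tsum fun p => (p.2.2.1).le

set_option maxHeartbeats 1000000 in
lemma iterate (hr : 0 < r) (ν : Measure (Fin n → ℝ)) (hν : ν ≪ volume) (B : ℝ≥0∞)
    (Hcell : ∀ (k : ℕ) (m : Fin n → ℕ), (∀ i, m i < 2 ^ k) →
      ∀ S : Set (Fin n → ℝ), MeasurableSet S →
        2 * volume (S ∩ cell q r k m) ≤ volume (cell q r k m) →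
        ν (S ∩ cell q r k m) ≤ B * ν (cell q r k m)) :
    ∀ (M : ℕ) (S : Set (Fin n → ℝ)), MeasurableSet S → S ⊆ Qh q r →
      2 ^ ((n+1) * M) * volume S ≤ volume (Qh q r) → ν S ≤ B ^ M * ν (Qh q r) := by
  intro M
  induction M with
  | zero => intro S hSm hS _; simpa using measure_mono hS
  | succ M ih =>
    intro S hSm hS hvol
    have h2M : (2:ℝ≥0∞) ^ (n+1) * volume S ≤ volume (Qh q r) := by
      refine le_trans ?_ hvol
      apply mul_le_mul_left
      apply pow_le_pow_right₀ one_le_two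
      nlinarith
    have h0 : ¬ good q r S 0 (fun _ => 0) := by
      rw [good, cell_zero, Set.inter_eq_self_of_subset_left hS]
      exact not_lt.2 h2M
    obtain ⟨Ω, hΩm, hΩQ, hνS, hvolΩ⟩ := Step.step hr ν hν B Hcell hSm hS h0
    have hvol' : 2 ^ ((n+1) * M) * volume Ω ≤ volume (Qh q r) := by
      calc 2 ^ ((n+1) * M) * volume Ω ≤ 2 ^ ((n+1) * M) * (2 ^ (n+1) * volume S) :=
            mul_le_mul_right hvolΩ _
        _ = 2 ^ ((n+1) * (M+1)) * volume S := by rw [← mul_assoc, ← pow_add]; ring_nf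
        _ ≤ volume (Qh q r) := hvol
    calc ν S ≤ B * ν Ω := hνS
      _ ≤ B * (B ^ M * ν (Qh q r)) := mul_le_mul_right (ih Ω hΩm hΩQ hvol') _
      _ = B ^ (M+1) * ν (Qh q r) := by rw [← mul_assoc, ← pow_succ']

end Step

section Weight

variable {γ : (Fin n → ℝ) → ℝ}

/-- The weighted measure. -/
def ν (γ : (Fin n → ℝ) → ℝ) : Measure (Fin n → ℝ) :=
  volume.withDensity fun y => ENNReal.ofReal (γ y)

lemma ν_apply {A : Set (Fin n → ℝ)} (hA : MeasurableSet A) :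
    ν γ A = ∫⁻ y in A, ENNReal.ofReal (γ y) := withDensity_apply _ hA

lemma ν_ac : ν γ ≪ (volume : Measure (Fin n → ℝ)) := withDensity_absolutelyContinuous _ _

lemma ν_cube_lt_top (hloc : LocallyIntegrable γ volume) (z : Fin n → ℝ) (s : ℝ) :
    ν γ (cube z s) < ∞ := by
  have hm : MeasurableSet (cube z s) := by rw [cube]; exact measurableSet_Icc
  rw [ν_apply hm]
  have hint : IntegrableOn γ (cube z s) volume := hloc.integrableOn_isCompact isCompact_Icc
  calc (∫⁻ y in cube z s, ENNReal.ofReal (γ y)) ≤ ∫⁻ y in cube z s, (‖γ y‖₊ : ℝ≥0∞) :=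
        lintegral_mono fun y => Real.ofReal_le_enorm _
    _ < ∞ := hint.2

lemma ν_pos (hpos : ∀ᵐ x ∂(volume : Measure (Fin n → ℝ)), 0 < γ x)
    (hmeas : AEMeasurable γ (volume : Measure (Fin n → ℝ)))
    {A : Set (Fin n → ℝ)} (hA : MeasurableSet A) (hvA : 0 < volume A) : 0 < ν γ A := by
  rw [ν_apply hA, pos_iff_ne_zero]
  intro hzero
  have hg : AEMeasurable (fun y => ENNReal.ofReal (γ y)) (volume.restrict A) :=
    (ENNReal.measurable_ofReal.comp_aemeasurable hmeas).restrict
  have hae : ∀ᵐ y ∂(volume.restrict A), ENNReal.ofReal (γ y) = 0 :=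
    (lintegral_eq_zero_iff' hg).1 hzero
  have hpos' : ∀ᵐ y ∂(volume.restrict A), 0 < γ y := ae_restrict_of_ae hpos
  have hfalse : ∀ᵐ _y ∂(volume.restrict A), False := by
    filter_upwards [hae, hpos'] with y h1 h2
    rw [ENNReal.ofReal_eq_zero] at h1
    linarith
  have : (volume.restrict A) Set.univ = 0 := by simpa using hfalse
  rw [Measure.restrict_apply_univ] at this
  exact hvA.ne' this

/-- the closed cube associated with a cell, and transfer of `ν` and `volume`. -/
lemma cube_eq_pi (z : Fin n → ℝ) (s : ℝ) :
    cube z s = Set.univ.pi fun i => Set.Icc (z i) (z i + s) := by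
  rw [cube, ← Set.pi_univ_Icc]

lemma volume_cube (z : Fin n → ℝ) {s : ℝ} (hs : 0 ≤ s) :
    volume (cube z s) = ENNReal.ofReal s ^ n := by
  rw [cube_eq_pi, volume_pi_pi]
  simp only [Real.volume_Icc]
  have : ∀ i : Fin n, ENNReal.ofReal (z i + s - z i) = ENNReal.ofReal s := fun i => by
    congr 1; ring
  rw [Finset.prod_congr rfl (fun i _ => this i), Finset.prod_const, Finset.card_univ,
    Fintype.card_fin]

variable {q : Fin n → ℝ} {r : ℝ}

lemma cell_subset_cube (k : ℕ) (m : Fin n → ℕ) :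
    cell q r k m ⊆ cube (fun i => q i + m i * (r / 2 ^ k)) (r / 2 ^ k) := by
  rw [cube_eq_pi]
  refine Set.pi_mono fun i _ => ?_
  rw [show q i + (m i) * (r / 2 ^ k) + r / 2 ^ k = q i + ((m i : ℝ) + 1) * (r / 2 ^ k) by ring]
  exact Set.Ico_subset_Icc_self

lemma volume_cube_cell (hr : 0 < r) (k : ℕ) (m : Fin n → ℕ) :
    volume (cube (fun i => q i + m i * (r / 2 ^ k)) (r / 2 ^ k)) = volume (cell q r k m) := by
  rw [volume_cube _ (hpos hr k).le, volume_cell]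

lemma ν_cube_cell (hloc : LocallyIntegrable γ volume) (hr : 0 < r) (k : ℕ) (m : Fin n → ℕ) :
    ν γ (cube (fun i => q i + m i * (r / 2 ^ k)) (r / 2 ^ k)) = ν γ (cell q r k m) := by
  set Qc := cube (fun i => q i + m i * (r / 2 ^ k)) (r / 2 ^ k) with hQc
  have hsub : cell q r k m ⊆ Qc := cell_subset_cube k m
  have hdiff : volume (Qc \ cell q r k m) = 0 := by
    have h1 := measure_diff hsub (Step.measurable_cell k m).nullMeasurableSet
      (Step.volume_cell_lt_top (q := q) k m).ne
    rw [volume_cube_cell hr] at h1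
    simpa [h1] using tsub_self _
  have hν0 : ν γ (Qc \ cell q r k m) = 0 := ν_ac hdiff
  have := measure_inter_add_diff (μ := ν γ) (t := cell q r k m) Qc
    (Step.measurable_cell (q := q) (r := r) k m)
  rw [Set.inter_eq_self_of_subset_right hsub] at this
  rw [← this, hν0, add_zero]

/-- Per-cell estimate from the cube hypothesis `H1`. -/
lemma Hcell_of_H1 (hγ : IsWeight γ) {a : ℝ} (ha : 0 < a) (ha2 : a ≤ 1/2)
    (H1 : ∀ (z : Fin n → ℝ) (s : ℝ), 0 < s → ∀ A ⊆ cube z s, MeasurableSet A →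
      volume (cube z s) ≤ 2 * volume A → ENNReal.ofReal a * ν γ (cube z s) ≤ ν γ A)
    (hr : 0 < r) (k : ℕ) (m : Fin n → ℕ)
    (S : Set (Fin n → ℝ)) (hSm : MeasurableSet S)
    (hhalf : 2 * volume (S ∩ cell q r k m) ≤ volume (cell q r k m)) :
    ν γ (S ∩ cell q r k m) ≤ ENNReal.ofReal (1 - a) * ν γ (cell q r k m) := by
  set Qc := cube (fun i => q i + m i * (r / 2 ^ k)) (r / 2 ^ k) with hQc
  have hsub : cell q r k m ⊆ Qc := cell_subset_cube k m
  have hcellm := Step.measurable_cell (q := q) (r := r) k m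
  have hQcm : MeasurableSet Qc := by rw [hQc, cube]; exact measurableSet_Icc
  have hQctop : ν γ Qc ≠ ∞ := (ν_cube_lt_top hγ.1 _ _).ne
  have hvQc : volume Qc = volume (cell q r k m) := volume_cube_cell hr k m
  -- volume of S ∩ Qc equals volume of S ∩ cell
  have hbd : volume (Qc \ cell q r k m) = 0 := by
    have h1 := measure_diff hsub hcellm.nullMeasurableSet
      (Step.volume_cell_lt_top (q := q) k m).ne
    rw [hvQc] at h1
    simpa [h1] using tsub_self _
  have hvSQc : volume (S ∩ Qc) ≤ volume (S ∩ cell q r k m) := by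
    have : S ∩ Qc ⊆ (S ∩ cell q r k m) ∪ (Qc \ cell q r k m) := by
      rintro y ⟨hyS, hyQ⟩
      by_cases hy : y ∈ cell q r k m
      · exact Or.inl ⟨hyS, hy⟩
      · exact Or.inr ⟨hyQ, hy⟩
    calc volume (S ∩ Qc) ≤ volume ((S ∩ cell q r k m) ∪ (Qc \ cell q r k m)) :=
          measure_mono this
      _ ≤ volume (S ∩ cell q r k m) + volume (Qc \ cell q r k m) := measure_union_le _ _
      _ = volume (S ∩ cell q r k m) := by rw [hbd, add_zero]
  -- A := Qc \ S has at least half the measure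
  have hA : volume Qc ≤ 2 * volume (Qc \ S) := by
    have hsplit : volume (Qc ∩ S) + volume (Qc \ S) = volume Qc :=
      measure_inter_add_diff Qc hSm
    have h1 : volume (Qc ∩ S) ≤ volume (Qc \ S) := by
      have h2 : 2 * volume (Qc ∩ S) ≤ volume Qc := by
        rw [Set.inter_comm]
        calc 2 * volume (S ∩ Qc) ≤ 2 * volume (S ∩ cell q r k m) :=
              mul_le_mul_right hvSQc _
          _ ≤ volume (cell q r k m) := hhalf
          _ = volume Qc := hvQc.symm
      rw [← hsplit, two_mul] at h2
      exact (ENNReal.add_le_add_iff_left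
        ((lt_of_le_of_lt (measure_mono Set.inter_subset_left)
          (hvQc ▸ Step.volume_cell_lt_top (q := q) k m)).ne)).1 h2
    calc volume Qc = volume (Qc ∩ S) + volume (Qc \ S) := hsplit.symm
      _ ≤ volume (Qc \ S) + volume (Qc \ S) := add_le_add_left h1 _
      _ = 2 * volume (Qc \ S) := (two_mul _).symm
  have hH := H1 _ _ (hpos hr k) (Qc \ S) Set.diff_subset (hQcm.diff hSm) hA
  -- conclude
  have hsplitν : ν γ (Qc ∩ S) + ν γ (Qc \ S) = ν γ Qc :=
    measure_inter_add_diff Qc hSm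
  have hkey : ν γ (Qc ∩ S) ≤ ENNReal.ofReal (1 - a) * ν γ Qc := by
    have h1 : ν γ (Qc ∩ S) + ENNReal.ofReal a * ν γ Qc ≤
        ENNReal.ofReal a * ν γ Qc + ENNReal.ofReal (1 - a) * ν γ Qc := by
      calc ν γ (Qc ∩ S) + ENNReal.ofReal a * ν γ Qc
          ≤ ν γ (Qc ∩ S) + ν γ (Qc \ S) := add_le_add_right hH _
        _ = ν γ Qc := hsplitν
        _ = (ENNReal.ofReal a + ENNReal.ofReal (1 - a)) * ν γ Qc := by
            rw [← ENNReal.ofReal_add ha.le (by linarith), show a + (1 - a) = 1 by ring]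
            simp
        _ = ENNReal.ofReal a * ν γ Qc + ENNReal.ofReal (1 - a) * ν γ Qc := by
            rw [add_mul]
    rw [add_comm (ν γ (Qc ∩ S)) _] at h1
    exact (ENNReal.add_le_add_iff_left
      (ENNReal.mul_ne_top ENNReal.ofReal_ne_top hQctop)).1 h1
  have hmono2 : ν γ (S ∩ cell q r k m) ≤ ν γ (Qc ∩ S) := by
    apply measure_mono
    rintro y ⟨h1, h2⟩
    exact ⟨hsub h2, h1⟩
  calc ν γ (S ∩ cell q r k m) ≤ ν γ (Qc ∩ S) := hmono2
    _ ≤ ENNReal.ofReal (1 - a) * ν γ Qc := hkey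
    _ = ENNReal.ofReal (1 - a) * ν γ (cell q r k m) := by rw [ν_cube_cell hγ.1 hr]

lemma measurableSet_cube {z : Fin n → ℝ} {s : ℝ} : MeasurableSet (cube z s) := by
  rw [cube]; exact measurableSet_Icc

lemma volume_cube_pos {z : Fin n → ℝ} {s : ℝ} (hs : 0 < s) : 0 < volume (cube z s) := by
  rw [volume_cube z hs.le]
  exact ENNReal.pow_pos (ENNReal.ofReal_pos.2 hs) n

lemma volume_cube_ne_top {z : Fin n → ℝ} {s : ℝ} (hs : 0 ≤ s) : volume (cube z s) ≠ ∞ := by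
  rw [volume_cube z hs]
  exact ENNReal.pow_ne_top ENNReal.ofReal_ne_top

lemma H1_of_A1 (hγ : IsWeight γ) {C : ℝ} (hC : 1 ≤ C) (hA1 : A1Bound C γ) :
    ∀ (z : Fin n → ℝ) (s : ℝ), 0 < s → ∀ A ⊆ cube z s, MeasurableSet A →
      volume (cube z s) ≤ 2 * volume A →
      ENNReal.ofReal (1/(2*C)) * ν γ (cube z s) ≤ ν γ A := by
  intro z s hs A hAsub hAm hAvol
  have hQm : MeasurableSet (cube z s) := measurableSet_cube
  have hVpos : 0 < volume (cube z s) := volume_cube_pos hs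
  have hVtop : volume (cube z s) ≠ ∞ := volume_cube_ne_top hs.le
  set V := volume (cube z s) with hV
  set N := ν γ (cube z s) with hNdef
  have havg : avg (cube z s) γ = V⁻¹ * N := by rw [avg, hNdef, ν_apply hQm]
  have hCpos : (0:ℝ) < C := by linarith
  have haeA : ∀ᵐ y ∂(volume.restrict A),
      (ENNReal.ofReal C)⁻¹ * (V⁻¹ * N) ≤ ENNReal.ofReal (γ y) := by
    filter_upwards [ae_restrict_of_ae (hA1 z s hs), ae_restrict_mem hAm] with y h1 h2
    have h3 := h1 (hAsub h2)
    rw [havg, ENNReal.ofReal_mul hCpos.le] at h3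
    calc (ENNReal.ofReal C)⁻¹ * (V⁻¹ * N)
        ≤ (ENNReal.ofReal C)⁻¹ * (ENNReal.ofReal C * ENNReal.ofReal (γ y)) :=
          mul_le_mul_right h3 _
      _ = ENNReal.ofReal (γ y) := by
          rw [← mul_assoc, ENNReal.inv_mul_cancel (by simpa using hCpos)
            ENNReal.ofReal_ne_top, one_mul]
  have hint : (ENNReal.ofReal C)⁻¹ * (V⁻¹ * N) * volume A ≤ ν γ A := by
    rw [ν_apply hAm]
    calc (ENNReal.ofReal C)⁻¹ * (V⁻¹ * N) * volume A
        = ∫⁻ _ in A, (ENNReal.ofReal C)⁻¹ * (V⁻¹ * N) ∂volume := by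
          rw [setLIntegral_const]
      _ ≤ ∫⁻ y in A, ENNReal.ofReal (γ y) ∂volume := lintegral_mono_ae haeA
  have h1 : (1:ℝ≥0∞) ≤ V⁻¹ * (2 * volume A) := by
    calc (1:ℝ≥0∞) = V⁻¹ * V := (ENNReal.inv_mul_cancel hVpos.ne' hVtop).symm
      _ ≤ V⁻¹ * (2 * volume A) := mul_le_mul_right hAvol _
  have hhalf : (2:ℝ≥0∞)⁻¹ ≤ V⁻¹ * volume A := by
    have h2 := mul_le_mul_right h1 (2:ℝ≥0∞)⁻¹
    rw [mul_one] at h2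
    calc (2:ℝ≥0∞)⁻¹ ≤ 2⁻¹ * (V⁻¹ * (2 * volume A)) := h2
      _ = (2⁻¹ * 2) * (V⁻¹ * volume A) := by ring
      _ = V⁻¹ * volume A := by
          rw [ENNReal.inv_mul_cancel two_ne_zero ENNReal.ofNat_ne_top, one_mul]
  have hofReal : ENNReal.ofReal (1/(2*C)) = 2⁻¹ * (ENNReal.ofReal C)⁻¹ := by
    rw [one_div, ENNReal.ofReal_inv_of_pos (by positivity),
      ENNReal.ofReal_mul (by norm_num),
      ENNReal.mul_inv (Or.inl (by norm_num)) (Or.inl ENNReal.ofReal_ne_top)]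
    norm_num
  calc ENNReal.ofReal (1/(2*C)) * N = (ENNReal.ofReal C)⁻¹ * 2⁻¹ * N := by
        rw [hofReal]; ring
    _ ≤ (ENNReal.ofReal C)⁻¹ * (V⁻¹ * volume A) * N :=
        mul_le_mul_left (mul_le_mul_right hhalf _) _
    _ = (ENNReal.ofReal C)⁻¹ * (V⁻¹ * N) * volume A := by ring
    _ ≤ ν γ A := hint

set_option maxHeartbeats 1000000 in
lemma H1_of_Ap (hγ : IsWeight γ) {p C : ℝ} (hp : 1 < p) (hC : 1 ≤ C) (hAp : ApBound p C γ) :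
    ∀ (z : Fin n → ℝ) (s : ℝ), 0 < s → ∀ A ⊆ cube z s, MeasurableSet A →
      volume (cube z s) ≤ 2 * volume A →
      ENNReal.ofReal ((2:ℝ) ^ (-p) / C) * ν γ (cube z s) ≤ ν γ A := by
  intro z s hs A hAsub hAm hAvol
  have hQm : MeasurableSet (cube z s) := measurableSet_cube
  have hVpos : 0 < volume (cube z s) := volume_cube_pos hs
  have hVtop : volume (cube z s) ≠ ∞ := volume_cube_ne_top hs.le
  set g : (Fin n → ℝ) → ℝ≥0∞ := fun y => ENNReal.ofReal (γ y) with hg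
  have hgmeas : AEMeasurable g (volume : Measure (Fin n → ℝ)) :=
    ENNReal.measurable_ofReal.comp_aemeasurable hγ.1.aestronglyMeasurable.aemeasurable
  set p' : ℝ := p / (p - 1) with hp'def
  have hpq : p.HolderConjugate p' := Real.HolderConjugate.conjExponent hp
  have hp0 : (0:ℝ) < p := hpq.pos
  have hp'0 : (0:ℝ) < p' := hpq.symm.pos
  have hpp' : p / p' = p - 1 := hpq.div_conj_eq_sub_one
  set V := volume (cube z s) with hV
  set N := ν γ (cube z s) with hNdef
  have hNtop : N ≠ ∞ := (ν_cube_lt_top hγ.1 z s).ne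
  set J := ∫⁻ y in cube z s, g y ^ (-(p'/p)) ∂volume with hJdef
  -- Hölder inequality on A
  have hfA : AEMeasurable (fun y => g y ^ (1/p)) (volume.restrict A) :=
    (ENNReal.continuous_rpow_const.measurable).comp_aemeasurable hgmeas.restrict
  have hgA : AEMeasurable (fun y => g y ^ (-(1/p))) (volume.restrict A) :=
    (ENNReal.continuous_rpow_const.measurable).comp_aemeasurable hgmeas.restrict
  have hvolA : volume A =
      ∫⁻ y in A, ((fun y => g y ^ (1/p)) * (fun y => g y ^ (-(1/p)))) y ∂volume := by
    have hone : ∀ᵐ y ∂(volume.restrict A),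
        ((fun y => g y ^ (1/p)) * (fun y => g y ^ (-(1/p)))) y = 1 := by
      filter_upwards [ae_restrict_of_ae hγ.2] with y hy
      have hgy0 : g y ≠ 0 := by
        rw [hg]
        simp only [ne_eq, ENNReal.ofReal_eq_zero, not_le]
        exact hy
      simp only [Pi.mul_apply]
      rw [← ENNReal.rpow_add _ _ hgy0 ENNReal.ofReal_ne_top]
      norm_num
    rw [lintegral_congr_ae hone, setLIntegral_one]
  have hHo := ENNReal.lintegral_mul_le_Lp_mul_Lq (volume.restrict A) hpq hfA hgA
  -- identify the two factors
  have hfact1 : (∫⁻ y in A, ((fun y => g y ^ (1/p)) y) ^ p ∂volume) = ν γ A := by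
    rw [ν_apply hAm]
    apply lintegral_congr
    intro y
    rw [← ENNReal.rpow_mul, show (1/p) * p = 1 by field_simp, ENNReal.rpow_one]
  have hfact2 : (∫⁻ y in A, ((fun y => g y ^ (-(1/p))) y) ^ p' ∂volume)
      = ∫⁻ y in A, g y ^ (-(p'/p)) ∂volume := by
    apply lintegral_congr
    intro y
    rw [← ENNReal.rpow_mul, show (-(1/p)) * p' = -(p'/p) by ring]
  have hV0 : V ≠ 0 := hVpos.ne'
  have hJmono : (∫⁻ y in A, g y ^ (-(p'/p)) ∂volume) ≤ J :=
    lintegral_mono_set hAsub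
  have hHolder : volume A ≤ (ν γ A) ^ (1/p) * J ^ (1/p') := by
    rw [hvolA]
    refine hHo.trans ?_
    rw [hfact1, hfact2]
    exact mul_le_mul_right (ENNReal.rpow_le_rpow hJmono (by positivity)) _
  -- the Ap bound
  have havg : avg (cube z s) γ = V⁻¹ * N := by rw [avg, hNdef, ν_apply hQm]
  have havgP : avgP (cube z s) (conjExp p / p) (fun y => (γ y)⁻¹)
      = (V⁻¹ * J) ^ (p/p') := by
    have hconj : conjExp p = p' := rfl
    have hintg : (∫⁻ y in cube z s, ENNReal.ofReal (|(γ y)⁻¹| ^ (p'/p)) ∂volume) = J := by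
      rw [hJdef]
      apply lintegral_congr_ae
      filter_upwards [ae_restrict_of_ae hγ.2] with y hy
      rw [abs_of_pos (inv_pos.2 hy), ← ENNReal.ofReal_rpow_of_pos (inv_pos.2 hy),
        ENNReal.ofReal_inv_of_pos hy, ENNReal.inv_rpow, ← ENNReal.rpow_neg]
    rw [avgP, hconj, avg]
    rw [show (∫⁻ y in cube z s, ENNReal.ofReal (|(γ y)⁻¹| ^ (p'/p)) ∂volume) = J from hintg]
    rw [one_div_div]
  have hApB := hAp z s hs
  rw [havg, havgP, hpp'] at hApB
  -- clear denominators: N * J^(p-1) ≤ C * V^p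
  have hcanc1 : V⁻¹ * V = 1 := ENNReal.inv_mul_cancel hV0 hVtop
  have hcanc2 : (V⁻¹)^(p-1) * V^(p-1) = (1:ℝ≥0∞) := by
    rw [← ENNReal.mul_rpow_of_nonneg _ _ (by linarith), hcanc1, ENNReal.one_rpow]
  have hVp : V * V^(p-1) = V^(p:ℝ) := by
    nth_rewrite 1 [← ENNReal.rpow_one V]
    rw [← ENNReal.rpow_add _ _ hV0 hVtop, show (1:ℝ) + (p-1) = p by ring]
  have hexp : (V⁻¹ * J)^(p-1) = (V⁻¹)^(p-1) * J^(p-1) :=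
    ENNReal.mul_rpow_of_nonneg _ _ (by linarith)
  have h2 : N * J^(p-1) ≤ ENNReal.ofReal C * V^(p:ℝ) := by
    rw [hexp] at hApB
    have hmul := mul_le_mul_left hApB (V * V^(p-1))
    calc N * J^(p-1)
        = ((V⁻¹ * N) * ((V⁻¹)^(p-1) * J^(p-1))) * (V * V^(p-1)) := by
          have : ((V⁻¹ * N) * ((V⁻¹)^(p-1) * J^(p-1))) * (V * V^(p-1))
              = ((V⁻¹ * V) * ((V⁻¹)^(p-1) * V^(p-1))) * (N * J^(p-1)) := by ring
          rw [this, hcanc1, hcanc2, one_mul, one_mul]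
      _ ≤ ENNReal.ofReal C * (V * V^(p-1)) := hmul
      _ = ENNReal.ofReal C * V^(p:ℝ) := by rw [hVp]
  -- lower bound for volume A
  have hhalf : V / 2 ≤ volume A := by
    rw [ENNReal.div_le_iff_le_mul (Or.inl two_ne_zero) (Or.inl ENNReal.ofNat_ne_top)]
    rwa [mul_comm]
  have h3 : (volume A) ^ (p:ℝ) ≤ ν γ A * J^(p-1) := by
    calc (volume A) ^ (p:ℝ) ≤ ((ν γ A)^(1/p) * J^(1/p'))^(p:ℝ) :=
          ENNReal.rpow_le_rpow hHolder hp0.le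
      _ = ν γ A * J^(p-1) := by
          rw [ENNReal.mul_rpow_of_nonneg _ _ hp0.le, ← ENNReal.rpow_mul,
            ← ENNReal.rpow_mul, show (1/p) * p = 1 by field_simp,
            show (1/p') * p = p - 1 by rw [← hpp']; ring, ENNReal.rpow_one]
  have h4 : (N * ((2:ℝ≥0∞)^(p:ℝ))⁻¹) * V^(p:ℝ) ≤ (ν γ A * ENNReal.ofReal C) * V^(p:ℝ) := by
    have hd : (V / 2) ^ (p:ℝ) = V^(p:ℝ) * ((2:ℝ≥0∞)^(p:ℝ))⁻¹ := by
      rw [ENNReal.div_rpow_of_nonneg _ _ hp0.le, div_eq_mul_inv]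
    calc (N * ((2:ℝ≥0∞)^(p:ℝ))⁻¹) * V^(p:ℝ) = N * ((V/2)^(p:ℝ)) := by rw [hd]; ring
      _ ≤ N * ((volume A)^(p:ℝ)) :=
          mul_le_mul_right (ENNReal.rpow_le_rpow hhalf hp0.le) _
      _ ≤ N * (ν γ A * J^(p-1)) := mul_le_mul_right h3 _
      _ = ν γ A * (N * J^(p-1)) := by ring
      _ ≤ ν γ A * (ENNReal.ofReal C * V^(p:ℝ)) := mul_le_mul_right h2 _
      _ = (ν γ A * ENNReal.ofReal C) * V^(p:ℝ) := by ring
  have h5 : N * ((2:ℝ≥0∞)^(p:ℝ))⁻¹ ≤ ν γ A * ENNReal.ofReal C :=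
    (ENNReal.mul_le_mul_iff_left (ENNReal.rpow_pos hVpos hVtop).ne'
      (ENNReal.rpow_ne_top_of_nonneg hp0.le hVtop)).1 h4
  have hC0 : (ENNReal.ofReal C) ≠ 0 := by
    simp only [ne_eq, ENNReal.ofReal_eq_zero, not_le]
    linarith
  have h6 : N * ((2:ℝ≥0∞)^(p:ℝ))⁻¹ * (ENNReal.ofReal C)⁻¹ ≤ ν γ A := by
    have := mul_le_mul_left h5 (ENNReal.ofReal C)⁻¹
    rwa [mul_assoc (ν γ A), ENNReal.mul_inv_cancel hC0 ENNReal.ofReal_ne_top, mul_one] at this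
  have hfin : ENNReal.ofReal ((2:ℝ)^(-p:ℝ)/C)
      = ((2:ℝ≥0∞)^(p:ℝ))⁻¹ * (ENNReal.ofReal C)⁻¹ := by
    rw [div_eq_mul_inv, ENNReal.ofReal_mul (by positivity),
      ENNReal.ofReal_inv_of_pos (by linarith)]
    congr 1
    rw [Real.rpow_neg (by norm_num), ENNReal.ofReal_inv_of_pos (by positivity)]
    congr 1
    rw [show (2:ℝ≥0∞) = ENNReal.ofReal 2 by norm_num,
      ENNReal.ofReal_rpow_of_pos (by norm_num)]
  calc ENNReal.ofReal ((2:ℝ)^(-p:ℝ)/C) * N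
      = N * ((2:ℝ≥0∞)^(p:ℝ))⁻¹ * (ENNReal.ofReal C)⁻¹ := by rw [hfin]; ring
    _ ≤ ν γ A := h6

lemma exists_H1 {p : ℝ} (hγ : IsWeight γ)
    (hAp : (p = 1 ∧ IsA1 γ) ∨ (1 < p ∧ IsAp p γ)) :
    ∃ a : ℝ, 0 < a ∧ a ≤ 1/2 ∧ ∀ (z : Fin n → ℝ) (s : ℝ), 0 < s →
      ∀ A ⊆ cube z s, MeasurableSet A → volume (cube z s) ≤ 2 * volume A →
        ENNReal.ofReal a * ν γ (cube z s) ≤ ν γ A := by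
  rcases hAp with ⟨_, C, hC, hA1⟩ | ⟨hp1, C, hC, hApB⟩
  · set C' := max C 1 with hC'def
    have hC' : 1 ≤ C' := le_max_right _ _
    have hA1' : A1Bound C' γ := by
      intro x r hr
      filter_upwards [hA1 x r hr, hγ.2] with y h1 h2
      intro hy
      refine (h1 hy).trans (ENNReal.ofReal_le_ofReal ?_)
      have h3 := le_max_left C 1
      nlinarith
    refine ⟨1/(2*C'), by positivity, ?_, H1_of_A1 hγ hC' hA1'⟩
    exact one_div_le_one_div_of_le (by norm_num) (by linarith)
  · set C' := max C 1 with hC'def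
    have hC' : 1 ≤ C' := le_max_right _ _
    have hApB' : ApBound p C' γ := fun x r hr =>
      (hApB x r hr).trans (ENNReal.ofReal_le_ofReal (le_max_left C 1))
    refine ⟨(2:ℝ)^(-p)/C', by positivity, ?_, H1_of_Ap hγ hp1 hC' hApB'⟩
    have h1 : (2:ℝ)^(-p:ℝ) ≤ 1/2 := by
      have h2 := Real.rpow_le_rpow_of_exponent_le (by norm_num : (1:ℝ) ≤ 2)
        (by linarith : (-p:ℝ) ≤ -1)
      rw [show ((-1:ℝ)) = ((-1:ℤ):ℝ) by norm_num, Real.rpow_intCast] at h2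
      norm_num at h2
      linarith
    have h3 : (2:ℝ)^(-p:ℝ)/C' ≤ (2:ℝ)^(-p:ℝ) := div_le_self (by positivity) hC'
    linarith

end Weight
end ApRR

open ApRR

set_option maxHeartbeats 1000000 in
/-- If `γ ∈ A_p`, `1 ≤ p < ∞`, then there are `δ ∈ (0,1)` and `C > 0` such that
`M_S(γ)/M_Q(γ) ≤ C (|S|/|Q|)^{δ-1}` for every cube `Q` and measurable `S ⊆ Q`. -/
theorem ap_reverse_ratio {n : ℕ} (p : ℝ) (hp : 1 ≤ p) (γ : (Fin n → ℝ) → ℝ)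
    (hγ : IsWeight γ) (hAp : (p = 1 ∧ IsA1 γ) ∨ (1 < p ∧ IsAp p γ)) :
    ∃ δ : ℝ, 0 < δ ∧ δ < 1 ∧ ∃ C : ℝ, 0 < C ∧
      ∀ (x : Fin n → ℝ) (r : ℝ), 0 < r →
        ∀ S : Set (Fin n → ℝ), S ⊆ cube x r → MeasurableSet S → 0 < volume S →
          avg S γ / avg (cube x r) γ
            ≤ ENNReal.ofReal C * (volume S / volume (cube x r)) ^ (δ - 1) := by
  classical
  obtain ⟨a, ha0, ha12, H1⟩ := exists_H1 hγ hAp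
  set b : ℝ := 1 - a with hbdef
  have hb0 : 0 < b := by simp only [hbdef]; linarith
  have hb1 : b < 1 := by simp only [hbdef]; linarith
  set B : ℝ≥0∞ := ENNReal.ofReal b with hBdef
  set δ1 : ℝ := Real.log b⁻¹ / ((n+1) * Real.log 2) with hδ1def
  have hlog2 : (0:ℝ) < Real.log 2 := Real.log_pos (by norm_num)
  have hδ1pos : 0 < δ1 := by
    apply div_pos
    · apply Real.log_pos
      rw [one_lt_inv_iff₀]
      exact ⟨hb0, hb1⟩
    · positivity
  refine ⟨min δ1 (1/2), lt_min hδ1pos (by norm_num), lt_of_le_of_lt (min_le_right _ _)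
    (by norm_num), 1/b, by positivity, ?_⟩
  set δ : ℝ := min δ1 (1/2) with hδdef
  intro x r hr S hSQ hSm hS0
  -- basic quantities
  have hQm : MeasurableSet (cube x r) := measurableSet_cube
  have hVpos : 0 < volume (cube x r) := volume_cube_pos hr
  have hVtop : volume (cube x r) ≠ ∞ := volume_cube_ne_top hr.le
  set V := volume (cube x r) with hVdef
  have hQhsub : Qh x r ⊆ cube x r := by
    intro y hy
    rw [cube_eq_pi]
    intro i hi
    exact Set.Icc_subset_Icc_right (by linarith) (Set.Ico_subset_Icc_self (hy i hi))
  have hQhm : MeasurableSet (Qh x r) := MeasurableSet.univ_pi fun i => measurableSet_Ico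
  have hVQh : volume (Qh x r) = V := by
    rw [volume_Qh, hVdef, volume_cube x hr.le]
  have hQdiff : volume (cube x r \ Qh x r) = 0 := by
    have h1 := measure_diff hQhsub hQhm.nullMeasurableSet (hVQh ▸ hVtop)
    rw [hVQh] at h1
    simpa [h1] using tsub_self _
  -- ν basics
  have hgaemeas : AEMeasurable γ (volume : Measure (Fin n → ℝ)) :=
    hγ.1.aestronglyMeasurable.aemeasurable
  have hνQpos : 0 < ν γ (cube x r) := ν_pos hγ.2 hgaemeas hQm hVpos
  have hνQtop : ν γ (cube x r) ≠ ∞ := (ν_cube_lt_top hγ.1 x r).ne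
  set νQ := ν γ (cube x r) with hνQdef
  have hνQh : ν γ (Qh x r) = νQ := by
    have hν0 : ν γ (cube x r \ Qh x r) = 0 := ν_ac hQdiff
    have h2 := measure_inter_add_diff (μ := ν γ) (t := Qh x r) (cube x r) hQhm
    rw [Set.inter_eq_self_of_subset_right hQhsub, hν0, add_zero] at h2
    rw [hνQdef, ← h2]
  -- S ∩ Qh
  set S' := S ∩ Qh x r with hS'def
  have hS'm : MeasurableSet S' := hSm.inter hQhm
  have hS'sub : S' ⊆ Qh x r := Set.inter_subset_right
  have hSdiff : volume (S \ Qh x r) = 0 :=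
    measure_mono_null (Set.diff_subset_diff_left hSQ) hQdiff
  have hvolS' : volume S' = volume S := by
    apply le_antisymm (measure_mono Set.inter_subset_left)
    calc volume S ≤ volume S' + volume (S \ Qh x r) := by
          rw [hS'def]
          exact measure_le_inter_add_diff _ _ _
      _ = volume S' := by rw [hSdiff, add_zero]
  have hνS' : ν γ S = ν γ S' := by
    apply le_antisymm _ (measure_mono Set.inter_subset_left)
    calc ν γ S ≤ ν γ S' + ν γ (S \ Qh x r) := by
          rw [hS'def]
          exact measure_le_inter_add_diff _ _ _
      _ = ν γ S' := by rw [ν_ac hSdiff, add_zero]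
  -- real quantities
  have hVS_top : volume S ≠ ∞ := ((measure_mono hSQ).trans_lt hVtop.lt_top).ne
  set vs : ℝ := (volume S).toReal with hvsdef
  set v : ℝ := V.toReal with hvdef
  have hvs0 : 0 < vs := ENNReal.toReal_pos hS0.ne' hVS_top
  have hv0 : 0 < v := ENNReal.toReal_pos hVpos.ne' hVtop
  have hvsv : vs ≤ v := ENNReal.toReal_mono hVtop (measure_mono hSQ)
  set t : ℝ := vs / v with htdef
  have ht0 : 0 < t := by positivity
  have ht1 : t ≤ 1 := by rw [htdef, div_le_one hv0]; exact hvsv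
  set L : ℝ := Real.logb 2 (v / vs) with hLdef
  have hvvs1 : 1 ≤ v / vs := (one_le_div hvs0).2 hvsv
  have hL0 : 0 ≤ L := Real.logb_nonneg (by norm_num) hvvs1
  set m : ℕ := ⌊L / (n+1)⌋₊ with hmdef
  -- iteration hypothesis
  have hiterhyp : 2 ^ ((n+1) * m) * volume S' ≤ volume (Qh x r) := by
    rw [hvolS', hVQh]
    have hfin1 : (2:ℝ≥0∞) ^ ((n+1)*m) * volume S ≠ ∞ :=
      ENNReal.mul_ne_top (ENNReal.pow_ne_top (by norm_num)) hVS_top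
    rw [← ENNReal.toReal_le_toReal hfin1 hVtop, ENNReal.toReal_mul, ENNReal.toReal_pow,
      ENNReal.toReal_ofNat]
    have hm1 : ((n+1) * m : ℝ) ≤ L := by
      have := Nat.floor_le (by positivity : (0:ℝ) ≤ L / (n+1))
      rw [← hmdef] at this
      have h2 : (m:ℝ) * (n+1) ≤ L := by
        rw [← le_div_iff₀ (by positivity : (0:ℝ) < (n:ℝ)+1)]
        exact this
      push_cast
      linarith
    have h2 : (2:ℝ) ^ ((n+1)*m) ≤ v / vs := by
      calc (2:ℝ) ^ ((n+1)*m) = (2:ℝ) ^ (((n+1)*m : ℕ) : ℝ) := by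
            rw [Real.rpow_natCast]
        _ ≤ (2:ℝ) ^ L := by
            apply Real.rpow_le_rpow_of_exponent_le (by norm_num)
            push_cast
            push_cast at hm1
            linarith
        _ = v / vs := Real.rpow_logb (by norm_num) (by norm_num) (by positivity)
    calc (2:ℝ) ^ ((n+1)*m) * (volume S).toReal = (2:ℝ) ^ ((n+1)*m) * vs := rfl
      _ ≤ (v / vs) * vs := by nlinarith
      _ = v := by field_simp
  -- run the iteration
  have hiter := Step.iterate (q := x) hr (ν γ) ν_ac B
    (fun k mm _hm S₀ hS₀m hhalf => Hcell_of_H1 hγ ha0 ha12 H1 hr k mm S₀ hS₀m hhalf)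
    m S' hS'm hS'sub hiterhyp
  rw [hνQh, ← hνS'] at hiter
  -- LHS bound
  have hνQcanc : νQ * νQ⁻¹ = 1 := ENNReal.mul_inv_cancel hνQpos.ne' hνQtop
  have hLHS : avg S γ / avg (cube x r) γ ≤ B ^ m * (V * (volume S)⁻¹) := by
    have havgS : avg S γ = (volume S)⁻¹ * ν γ S := by rw [avg, ν_apply hSm]
    have havgQ : avg (cube x r) γ = V⁻¹ * νQ := by rw [avg, hνQdef, ν_apply hQm]
    rw [div_eq_mul_inv, havgS, havgQ,
      ENNReal.mul_inv (Or.inl (by simpa using hVtop)) (Or.inl (ENNReal.inv_ne_top.2 hVpos.ne')),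
      inv_inv]
    calc (volume S)⁻¹ * ν γ S * (V * νQ⁻¹)
        ≤ (volume S)⁻¹ * (B ^ m * νQ) * (V * νQ⁻¹) :=
          mul_le_mul_left (mul_le_mul_right hiter _) _
      _ = B ^ m * (V * (volume S)⁻¹) * (νQ * νQ⁻¹) := by ring
      _ = B ^ m * (V * (volume S)⁻¹) := by rw [hνQcanc, mul_one]
  refine hLHS.trans ?_
  -- RHS manipulation
  set tE : ℝ≥0∞ := volume S / V with htEdef
  have htE0 : tE ≠ 0 := by
    rw [htEdef]
    simp only [ne_eq, ENNReal.div_eq_zero_iff, not_or]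
    exact ⟨hS0.ne', hVtop⟩
  have htEtop : tE ≠ ∞ := (ENNReal.div_lt_top hVS_top hVpos.ne').ne
  have htEreal : tE = ENNReal.ofReal t := by
    rw [← ENNReal.ofReal_toReal htEtop, htEdef, ENNReal.toReal_div]
  have hsplit : tE ^ (δ - 1) = tE ^ δ * (V * (volume S)⁻¹) := by
    have h1 : tE⁻¹ = V * (volume S)⁻¹ := by
      rw [htEdef, ENNReal.inv_div (Or.inl hVtop) (Or.inl hVpos.ne'), div_eq_mul_inv]
    rw [show δ - 1 = δ + (-1) by ring, ENNReal.rpow_add _ _ htE0 htEtop,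
      ENNReal.rpow_neg_one, h1]
  -- core numeric inequality
  have hcore : b ^ m ≤ (1/b) * t ^ δ := by
    have hmL : L / (n+1) < m + 1 := Nat.lt_floor_add_one _
    have hbm : b ^ m = b ^ (m:ℝ) := (Real.rpow_natCast b m).symm
    have h1 : b ^ (m:ℝ) ≤ b ^ (L/(n+1) - 1) := by
      apply Real.rpow_le_rpow_of_exponent_ge hb0 hb1.le
      linarith
    have h2 : b ^ (L/(n+1) - 1 : ℝ) = b ^ (L/(n+1) : ℝ) / b := by
      rw [Real.rpow_sub hb0, Real.rpow_one]
    have h3 : b ^ (L/(n+1) : ℝ) = t ^ δ1 := by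
      rw [Real.rpow_def_of_pos hb0, Real.rpow_def_of_pos ht0]
      congr 1
      have hLt : L = -Real.log t / Real.log 2 := by
        rw [hLdef, Real.logb, htdef, ← Real.log_inv]
        congr 1
        rw [inv_div]
      rw [hLt, hδ1def, Real.log_inv]
      field_simp
    have h4 : t ^ δ1 ≤ t ^ δ := by
      apply Real.rpow_le_rpow_of_exponent_ge ht0 ht1
      exact min_le_left _ _
    rw [hbm]
    calc b ^ (m:ℝ) ≤ b ^ (L/(n+1) - 1 : ℝ) := h1
      _ = b ^ (L/(n+1) : ℝ) / b := h2
      _ = t ^ δ1 / b := by rw [h3]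
      _ ≤ t ^ δ / b := by gcongr
      _ = (1/b) * t ^ δ := by ring
  -- transfer to ENNReal
  have hcoreE : B ^ m ≤ ENNReal.ofReal (1/b) * tE ^ δ := by
    calc B ^ m = ENNReal.ofReal (b ^ m) := by
          rw [hBdef, ← ENNReal.ofReal_pow hb0.le]
      _ ≤ ENNReal.ofReal ((1/b) * t ^ δ) := ENNReal.ofReal_le_ofReal hcore
      _ = ENNReal.ofReal (1/b) * tE ^ δ := by
          rw [ENNReal.ofReal_mul (by positivity), htEreal,
            ENNReal.ofReal_rpow_of_pos ht0]
  rw [hsplit]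
  calc B ^ m * (V * (volume S)⁻¹)
      ≤ (ENNReal.ofReal (1/b) * tE ^ δ) * (V * (volume S)⁻¹) :=
        mul_le_mul_left hcoreE _
    _ = ENNReal.ofReal (1/b) * (tE ^ δ * (V * (volume S)⁻¹)) := by ring
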